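/- arXiv:2604.02589 — 2 statements merged into one kernel-verified Lean document; each statement's English description precedes it below -/
import Mathlib

section
/- Let G be an analytic graph on a Polish space X, let A ⊆ X be analytic and let n be a natural number with Φ(A,n). Then there is a Borel set B ⊆ X containing the union of all connected components of G that meet A, such that B is G-invariant (a union of connected components of G) and the restriction of G to B admits a Borel proper 2-coloring, i.e., a Borel map c_B : B → {0,1} with c_B(x) ≠ c_B(y) whenever x, y ∈ B and (x,y) ∈ G. -/
open MeasureTheory

/-- A walk of length `m` in the graph given by the relation `Adj`. -/
def IsWalk {α : Type*} (Adj : α → α → Prop) (m : ℕ) (w : ℕ → α) : Prop :=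
  ∀ j, j < m → Adj (w j) (w (j + 1))

/-- The set of lengths of walks from `u` to `v`. -/
def walkLens {α : Type*} (Adj : α → α → Prop) (u v : α) : Set ℕ :=
  {m | ∃ w : ℕ → α, w 0 = u ∧ w m = v ∧ IsWalk Adj m w}

/-- `Φ(A,k)`: every odd-length walk in `G` with both endpoints in `A`
has length at most `2k - 1`. -/
def PhiProp {X : Type*} (G : X → X → Prop) (A : Set X) (k : ℕ) : Prop :=
  ∀ (m : ℕ) (w : ℕ → X), Odd m → IsWalk G m w → w 0 ∈ A → w m ∈ A → m ≤ 2 * k - 1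

/-- Reverse a walk (needs symmetry). -/
lemma walk_reverse {α : Type*} {G : α → α → Prop} (hsym : Symmetric G) {m : ℕ} {w : ℕ → α}
    (hw : IsWalk G m w) : IsWalk G m (fun j => w (m - j)) := by
  intro j hj
  have h1 : m - j = (m - (j + 1)) + 1 := by omega
  have h2 : m - (j + 1) < m := by omega
  simp only [h1]
  exact hsym (hw _ h2)

/-- Concatenate two walks. -/
lemma walk_concat {α : Type*} {G : α → α → Prop} {m1 m2 : ℕ} {w1 w2 : ℕ → α}
    (h1 : IsWalk G m1 w1) (h2 : IsWalk G m2 w2) (hjoin : w2 0 = w1 m1) :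
    ∃ v : ℕ → α, v 0 = w1 0 ∧ v (m1 + m2) = w2 m2 ∧ IsWalk G (m1 + m2) v := by
  refine ⟨fun j => if j ≤ m1 then w1 j else w2 (j - m1), by simp, ?_, ?_⟩
  · by_cases h : m1 + m2 ≤ m1
    · have hm2 : m2 = 0 := by omega
      simp [h, hm2, hjoin]
    · simp only [if_neg h]
      congr 1
      omega
  · intro j hj
    by_cases hjle : j + 1 ≤ m1
    · have hj' : j ≤ m1 := by omega
      simp only [if_pos hjle, if_pos hj']
      exact h1 j (by omega)
    · have hkey : (if j ≤ m1 then w1 j else w2 (j - m1)) = w2 (j - m1) := by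
        by_cases hj' : j ≤ m1
        · have : j = m1 := by omega
          simp [hj', this, ← hjoin]
        · simp [hj']
      simp only [if_neg hjle, hkey]
      have : j + 1 - m1 = (j - m1) + 1 := by omega
      rw [this]
      exact h2 _ (by omega)

/-- Extend a walk of positive length by `2t` keeping the same endpoints. -/
lemma walk_grow {α : Type*} {G : α → α → Prop} (hsym : Symmetric G) {m : ℕ} (hm : 1 ≤ m)
    {w : ℕ → α} (hw : IsWalk G m w) (t : ℕ) :
    ∃ v : ℕ → α, v 0 = w 0 ∧ v (m + 2 * t) = w m ∧ IsWalk G (m + 2 * t) v := by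
  induction t with
  | zero => exact ⟨w, rfl, rfl, hw⟩
  | succ t ih =>
    obtain ⟨v, hv0, hvm, hv⟩ := ih
    set M := m + 2 * t with hM
    refine ⟨fun j => if j ≤ M then v j else if j = M + 1 then v (M - 1) else v M,
      ?_, ?_, ?_⟩
    · simp [hv0]
    · have h1 : ¬ (m + 2 * (t + 1) ≤ M) := by omega
      have h2 : ¬ (m + 2 * (t + 1) = M + 1) := by omega
      simp only [if_neg h1, if_neg h2, hvm]
    · intro j hj
      have hM1 : 1 ≤ M := by omega
      have hedge : G (v (M - 1)) (v M) := by
        have := hv (M - 1) (by omega)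
        have hMe : M - 1 + 1 = M := by omega
        rwa [hMe] at this
      rcases lt_trichotomy j M with hlt | heq | hgt
      · have ha : j ≤ M := by omega
        have hb : j + 1 ≤ M := by omega
        simp only [if_pos ha, if_pos hb]
        exact hv j hlt
      · rw [heq]
        simp only [if_pos (le_refl M), if_neg (by omega : ¬ (M + 1 ≤ M)), if_pos rfl]
        exact hsym hedge
      · have hj' : j = M + 1 := by omega
        subst hj'
        simp only [if_neg (by omega : ¬ (M + 1 ≤ M)), if_pos rfl,
          if_neg (by omega : ¬ (M + 1 + 1 ≤ M)), if_neg (by omega : ¬ (M + 1 + 1 = M + 1))]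
        exact hedge

open Set in
lemma MeasureTheory.AnalyticSet.inter'' {α : Type*} [TopologicalSpace α] [T2Space α] {s t : Set α}
    (hs : AnalyticSet s) (ht : AnalyticSet t) : AnalyticSet (s ∩ t) := by
  rw [Set.inter_eq_iInter]
  exact AnalyticSet.iInter (fun b => by cases b <;> simpa)

open Set in
lemma MeasureTheory.AnalyticSet.union'' {α : Type*} [TopologicalSpace α] {s t : Set α}
    (hs : AnalyticSet s) (ht : AnalyticSet t) : AnalyticSet (s ∪ t) := by
  rw [Set.union_eq_iUnion]
  exact AnalyticSet.iUnion (fun b => by cases b <;> simpa)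

/-- The set of points reachable from `A` by a walk whose length satisfies `P` is analytic. -/
lemma reach_analytic {X : Type} [TopologicalSpace X] [PolishSpace X]
    (G : X → X → Prop) (hana : AnalyticSet {p : X × X | G p.1 p.2})
    (A : Set X) (hA : AnalyticSet A) (P : ℕ → Prop) :
    AnalyticSet {x : X | ∃ m, P m ∧ ∃ w : ℕ → X, w 0 ∈ A ∧ w m = x ∧ IsWalk G m w} := by
  classical
  have hW : ∀ m : ℕ, AnalyticSet {w : ℕ → X | w 0 ∈ A ∧ IsWalk G m w} := by
    intro m
    have heq : {w : ℕ → X | w 0 ∈ A ∧ IsWalk G m w}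
        = ⋂ j : ℕ, (((fun w : ℕ → X => w 0) ⁻¹' A) ∩
            (if j < m then (fun w : ℕ → X => (w j, w (j+1))) ⁻¹' {p : X × X | G p.1 p.2}
             else Set.univ)) := by
      ext w
      simp only [Set.mem_iInter, Set.mem_inter_iff, Set.mem_preimage, Set.mem_setOf_eq]
      constructor
      · rintro ⟨h1, h2⟩ j
        refine ⟨h1, ?_⟩
        by_cases hj : j < m
        · simpa [hj] using h2 j hj
        · simp [hj]
      · intro h
        refine ⟨(h 0).1, fun j hj => ?_⟩
        have := (h j).2
        simpa [hj] using this
    rw [heq]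
    refine AnalyticSet.iInter (fun j => AnalyticSet.inter'' ?_ ?_)
    · exact hA.preimage (continuous_apply 0)
    · by_cases hj : j < m
      · simp only [if_pos hj]
        exact hana.preimage ((continuous_apply j).prodMk (continuous_apply (j+1)))
      · simpa [hj] using isClosed_univ.analyticSet
  have heq : {x : X | ∃ m, P m ∧ ∃ w : ℕ → X, w 0 ∈ A ∧ w m = x ∧ IsWalk G m w}
      = ⋃ m : ℕ, (if P m then (fun w : ℕ → X => w m) '' {w : ℕ → X | w 0 ∈ A ∧ IsWalk G m w}
                  else ∅) := by
    ext x
    simp only [Set.mem_iUnion, Set.mem_setOf_eq]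
    constructor
    · rintro ⟨m, hPm, w, hw0, hwm, hw⟩
      exact ⟨m, by simp only [if_pos hPm]; exact ⟨w, ⟨hw0, hw⟩, hwm⟩⟩
    · rintro ⟨m, hm⟩
      by_cases hPm : P m
      · rw [if_pos hPm] at hm
        obtain ⟨w, ⟨hw0, hw⟩, hwm⟩ := hm
        exact ⟨m, hPm, w, hw0, hwm, hw⟩
      · rw [if_neg hPm] at hm
        exact absurd hm (Set.notMem_empty x)
  rw [heq]
  refine AnalyticSet.iUnion (fun m => ?_)
  by_cases hPm : P m
  · simp only [if_pos hPm]
    exact (hW m).image_of_continuous (continuous_apply m)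
  · simp [hPm, analyticSet_empty]

/-- The set of points with a neighbour in a measurable set is analytic. -/
lemma nset_analytic {X : Type} [TopologicalSpace X] [PolishSpace X] [MeasurableSpace X]
    [BorelSpace X] (G : X → X → Prop) (hana : AnalyticSet {p : X × X | G p.1 p.2})
    {T : Set X} (hT : MeasurableSet T) : AnalyticSet {x : X | ∃ y, G x y ∧ y ∈ T} := by
  have heq : {x : X | ∃ y, G x y ∧ y ∈ T}
      = Prod.fst '' ({p : X × X | G p.1 p.2} ∩ (Set.univ ×ˢ T)) := by
    ext x
    simp only [Set.mem_image, Set.mem_inter_iff, Set.mem_setOf_eq, Set.mem_prod, Set.mem_univ,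
      true_and, Prod.exists]
    constructor
    · rintro ⟨y, h1, h2⟩; exact ⟨x, y, ⟨h1, h2⟩, rfl⟩
    · rintro ⟨a, b, ⟨h1, h2⟩, rfl⟩; exact ⟨b, h1, h2⟩
  rw [heq]
  exact (hana.inter'' ((MeasurableSet.univ.prod hT).analyticSet)).image_of_continuous
    continuous_fst

/-- If `G` is an analytic graph on a Polish space `X`, `A ⊆ X` is analytic
and `Φ(A,n)` holds, then there is a `G`-invariant Borel set `B ⊇ A` (hence
containing all connected components meeting `A`) whose induced subgraph
admits a Borel proper 2-coloring. -/
theorem stmt5 {X : Type} [TopologicalSpace X] [PolishSpace X]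
    [MeasurableSpace X] [BorelSpace X]
    (G : X → X → Prop) (hsym : Symmetric G) (hirr : Irreflexive G)
    (hana : AnalyticSet {p : X × X | G p.1 p.2})
    (A : Set X) (hA : AnalyticSet A) (n : ℕ) (hPhi : PhiProp G A n) :
    ∃ B : Set X, MeasurableSet B ∧ A ⊆ B ∧
      (∀ x ∈ B, ∀ y, G x y → y ∈ B) ∧
      ∃ cB : X → Fin 2, Measurable cB ∧
        ∀ x ∈ B, ∀ y ∈ B, G x y → cB x ≠ cB y := by
  classical
  -- the sets of points reachable from `A` by even resp. odd walks
  set E : Set X := {x : X | ∃ m, Even m ∧ ∃ w : ℕ → X, w 0 ∈ A ∧ w m = x ∧ IsWalk G m w}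
    with hEdef
  set O : Set X := {x : X | ∃ m, Odd m ∧ ∃ w : ℕ → X, w 0 ∈ A ∧ w m = x ∧ IsWalk G m w}
    with hOdef
  have hEa : AnalyticSet E := reach_analytic G hana A hA Even
  have hOa : AnalyticSet O := reach_analytic G hana A hA Odd
  have hAE : A ⊆ E := fun a ha =>
    ⟨0, Even.zero, fun _ => a, ha, rfl, fun j hj => absurd hj (by omega)⟩
  -- neighbours of `E` lie in `O` and vice versa
  have hstep : ∀ (m : ℕ) (w : ℕ → X), w 0 ∈ A → IsWalk G m w → ∀ y, G (w m) y →
      ∃ v : ℕ → X, v 0 ∈ A ∧ v (m + 1) = y ∧ IsWalk G (m + 1) v := by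
    intro m w hw0 hw y hxy
    have h2 : IsWalk G 1 (fun j => if j = 0 then w m else y) := by
      intro j hj
      have hj0 : j = 0 := by omega
      subst hj0
      simpa using hxy
    obtain ⟨v, hv0, hvm, hv⟩ := walk_concat hw h2 (by simp)
    exact ⟨v, hv0 ▸ hw0, by simpa using hvm, hv⟩
  have hNE : ∀ x ∈ E, ∀ y, G x y → y ∈ O := by
    rintro x ⟨m, hm, w, hw0, hwm, hw⟩ y hxy
    obtain ⟨v, hv0, hvm, hv⟩ := hstep m w hw0 hw y (hwm ▸ hxy)
    exact ⟨m + 1, hm.add_one, v, hv0, hvm, hv⟩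
  have hNO : ∀ x ∈ O, ∀ y, G x y → y ∈ E := by
    rintro x ⟨m, hm, w, hw0, hwm, hw⟩ y hxy
    obtain ⟨v, hv0, hvm, hv⟩ := hstep m w hw0 hw y (hwm ▸ hxy)
    exact ⟨m + 1, hm.add_one, v, hv0, hvm, hv⟩
  -- `E` and `O` are disjoint, thanks to `Φ(A,n)`
  have hdisj : Disjoint E O := by
    rw [Set.disjoint_left]
    rintro x ⟨m1, hm1, w1, h10, h1m, h1w⟩ ⟨m2, hm2, w2, h20, h2m, h2w⟩
    have hrev : IsWalk G m2 (fun j => w2 (m2 - j)) := walk_reverse hsym h2w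
    have hjoin : (fun j => w2 (m2 - j)) 0 = w1 m1 := by simp [h2m, h1m]
    obtain ⟨v, hv0, hvm, hv⟩ := walk_concat h1w hrev hjoin
    have hodd : Odd (m1 + m2) := hm1.add_odd hm2
    have hpos : 1 ≤ m1 + m2 := hodd.pos
    obtain ⟨u, hu0, hum, hu⟩ := walk_grow hsym hpos hv n
    have hou : Odd (m1 + m2 + 2 * n) := hodd.add_even (even_two_mul n)
    have hu0A : u 0 ∈ A := by rw [hu0, hv0]; exact h10
    have humA : u (m1 + m2 + 2 * n) ∈ A := by
      rw [hum, hvm]; simpa using h20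
    have := hPhi _ u hou hu hu0A humA
    omega
  -- the invariant for the recursive construction of Borel approximations
  set Inv : Set X → Set X → Prop := fun C D =>
    MeasurableSet C ∧ MeasurableSet D ∧ E ⊆ C ∧ O ⊆ D ∧ Disjoint C D ∧
      ∀ x ∈ D, ∀ y, G x y → y ∈ C with hInvdef
  have hN : ∀ T : Set X, MeasurableSet T → AnalyticSet {x : X | ∃ y, G x y ∧ y ∈ T} :=
    fun T hT => nset_analytic G hana hT
  -- base case
  obtain ⟨C0, hEC0, hOC0, hC0m⟩ := hEa.measurablySeparable hOa hdisj
  have hbase : ∃ D0 : Set X, Inv C0 D0 := by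
    have hSa : AnalyticSet ({x : X | ∃ y, G x y ∧ y ∈ C0ᶜ} ∪ C0) :=
      (hN _ hC0m.compl).union'' hC0m.analyticSet
    have hdOS : Disjoint O ({x : X | ∃ y, G x y ∧ y ∈ C0ᶜ} ∪ C0) := by
      rw [Set.disjoint_left]
      rintro x hxO (⟨y, hxy, hyc⟩ | hxC0)
      · exact hyc (hEC0 (hNO x hxO y hxy))
      · exact Set.disjoint_left.1 hOC0 hxO hxC0
    obtain ⟨D0, hOD0, hSD0, hD0m⟩ := hOa.measurablySeparable hSa hdOS
    refine ⟨D0, hC0m, hD0m, hEC0, hOD0, ?_, ?_⟩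
    · exact Set.disjoint_left.2 fun x hxC0 hxD0 =>
        Set.disjoint_left.1 hSD0 (Set.mem_union_right _ hxC0) hxD0
    · intro x hxD0 y hxy
      by_contra hyC0
      exact Set.disjoint_left.1 hSD0 (Set.mem_union_left _ ⟨y, hxy, hyC0⟩) hxD0
  obtain ⟨D0, hbase⟩ := hbase
  -- the recursive step
  have step : ∀ C D, Inv C D → ∃ C' D', Inv C' D' ∧ C' ⊆ C ∧ D' ⊆ D ∧
      ∀ x ∈ C', ∀ y, G x y → y ∈ D := by
    rintro C D ⟨hCm, hDm, hEC, hOD, hCD, hDC⟩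
    have hS1a : AnalyticSet ({x : X | ∃ y, G x y ∧ y ∈ Dᶜ} ∪ Cᶜ) :=
      (hN _ hDm.compl).union'' hCm.compl.analyticSet
    have hd1 : Disjoint E ({x : X | ∃ y, G x y ∧ y ∈ Dᶜ} ∪ Cᶜ) := by
      rw [Set.disjoint_left]
      rintro x hxE (⟨y, hxy, hyD⟩ | hxC)
      · exact hyD (hOD (hNE x hxE y hxy))
      · exact hxC (hEC hxE)
    obtain ⟨C', hEC', hS1C', hC'm⟩ := hEa.measurablySeparable hS1a hd1
    have hC'C : C' ⊆ C := fun x hx => by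
      by_contra hxC
      exact Set.disjoint_left.1 hS1C' (Set.mem_union_right _ hxC) hx
    have hC'N : ∀ x ∈ C', ∀ y, G x y → y ∈ D := by
      intro x hx y hxy
      by_contra hyD
      exact Set.disjoint_left.1 hS1C' (Set.mem_union_left _ ⟨y, hxy, hyD⟩) hx
    have hS2a : AnalyticSet (({x : X | ∃ y, G x y ∧ y ∈ C'ᶜ} ∪ Dᶜ) ∪ C') :=
      ((hN _ hC'm.compl).union'' hDm.compl.analyticSet).union'' hC'm.analyticSet
    have hd2 : Disjoint O (({x : X | ∃ y, G x y ∧ y ∈ C'ᶜ} ∪ Dᶜ) ∪ C') := by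
      rw [Set.disjoint_left]
      rintro x hxO ((⟨y, hxy, hyC'⟩ | hxD) | hxC')
      · exact hyC' (hEC' (hNO x hxO y hxy))
      · exact hxD (hOD hxO)
      · exact Set.disjoint_left.1 hCD (hC'C hxC') (hOD hxO)
    obtain ⟨D', hOD', hS2D', hD'm⟩ := hOa.measurablySeparable hS2a hd2
    have hD'D : D' ⊆ D := fun x hx => by
      by_contra hxD
      exact Set.disjoint_left.1 hS2D' (Set.mem_union_left _ (Set.mem_union_right _ hxD)) hx
    have hD'C' : ∀ x ∈ D', ∀ y, G x y → y ∈ C' := by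
      intro x hx y hxy
      by_contra hyC'
      exact Set.disjoint_left.1 hS2D'
        (Set.mem_union_left _ (Set.mem_union_left _ ⟨y, hxy, hyC'⟩)) hx
    have hC'D' : Disjoint C' D' := Set.disjoint_left.2 fun x hxC' hxD' =>
      Set.disjoint_left.1 hS2D' (Set.mem_union_right _ hxC') hxD'
    exact ⟨C', D', ⟨hC'm, hD'm, hEC', hOD', hC'D', hD'C'⟩, hC'C, hD'D, hC'N⟩
  -- iterate
  have key : ∀ p : {p : Set X × Set X // Inv p.1 p.2},
      ∃ q : {p : Set X × Set X // Inv p.1 p.2},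
        q.1.1 ⊆ p.1.1 ∧ q.1.2 ⊆ p.1.2 ∧ ∀ x ∈ q.1.1, ∀ y, G x y → y ∈ p.1.2 := by
    rintro ⟨⟨C, D⟩, hInv⟩
    obtain ⟨C', D', h1, h2, h3, h4⟩ := step C D hInv
    exact ⟨⟨(C', D'), h1⟩, h2, h3, h4⟩
  choose F hF1 hF2 hF3 using key
  set seq : ℕ → {p : Set X × Set X // Inv p.1 p.2} :=
    fun k => F^[k] ⟨(C0, D0), hbase⟩ with hseqdef
  have hseq : ∀ k, seq (k + 1) = F (seq k) := fun k =>
    Function.iterate_succ_apply' F k _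
  set C : Set X := ⋂ k, (seq k).1.1 with hCdef
  set D : Set X := ⋂ k, (seq k).1.2 with hDdef
  have hCm : MeasurableSet C := MeasurableSet.iInter fun k => (seq k).2.1
  have hDm : MeasurableSet D := MeasurableSet.iInter fun k => (seq k).2.2.1
  have hEC : E ⊆ C := Set.subset_iInter fun k => (seq k).2.2.2.1
  have hOD : O ⊆ D := Set.subset_iInter fun k => (seq k).2.2.2.2.1
  have hCDdisj : Disjoint C D :=
    ((seq 0).2.2.2.2.2.1).mono (Set.iInter_subset _ 0) (Set.iInter_subset _ 0)
  have hCtoD : ∀ x ∈ C, ∀ y, G x y → y ∈ D := by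
    intro x hx y hxy
    refine Set.mem_iInter.2 fun k => ?_
    have hx' : x ∈ (seq (k + 1)).1.1 := Set.mem_iInter.1 hx (k + 1)
    rw [hseq k] at hx'
    exact hF3 (seq k) x hx' y hxy
  have hDtoC : ∀ x ∈ D, ∀ y, G x y → y ∈ C := by
    intro x hx y hxy
    refine Set.mem_iInter.2 fun k => ?_
    exact (seq k).2.2.2.2.2.2 x (Set.mem_iInter.1 hx k) y hxy
  refine ⟨C ∪ D, hCm.union hDm, fun a ha => Set.mem_union_left _ (hEC (hAE ha)), ?_, ?_⟩
  · rintro x (hxC | hxD) y hxy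
    · exact Set.mem_union_right _ (hCtoD x hxC y hxy)
    · exact Set.mem_union_left _ (hDtoC x hxD y hxy)
  · refine ⟨fun x => if x ∈ C then 0 else 1, Measurable.ite hCm measurable_const
      measurable_const, ?_⟩
    rintro x hx y hy hxy
    rcases hx with hxC | hxD
    · have hyD : y ∈ D := hCtoD x hxC y hxy
      have hyC : y ∉ C := fun h => Set.disjoint_left.1 hCDdisj h hyD
      simp only [if_pos hxC, if_neg hyC]
      decide
    · have hyC : y ∈ C := hDtoC x hxD y hxy
      have hxC : x ∉ C := fun h => Set.disjoint_left.1 hCDdisj h hxD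
      simp only [if_neg hxC, if_pos hyC]
      decide
end

section
/- Suppose n > 0, c : ℕ → ℕ takes only odd values, k is a natural number and t is a binary string of length less than n such that (p_k)^⌢t^⌢(0) and (p_k)^⌢t^⌢(1) are vertices of L^c_n. Then these two vertices are an odd distance apart in the path L^c_n. -/
open MeasureTheory

/-- The endpoint `e_i^n = (p_0)^⌢(0)^{n-1}⌢(i)` of the finite path `L^c_n`
(vertices of `L^c_n` are coded as lists of naturals, the head being the
index `k` of `p_k` and the tail being a binary string). -/
def pathEnd : ℕ → ℕ → List ℕ
  | 0, _ => [0]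
  | m + 1, i => 0 :: (List.replicate m 0 ++ [i])

/-- The vertex set of the finite path `L^c_n`. -/
def LVerts (c : ℕ → ℕ) : ℕ → Set (List ℕ)
  | 0 => {[0]}
  | n + 1 =>
      ((fun v => v ++ [0]) '' LVerts c n) ∪ ((fun v => v ++ [1]) '' LVerts c n) ∪
        {v | ∃ k ≤ c n, v = [k]}

/-- The edge set of the finite path `L^c_n` (as a set of ordered pairs,
one orientation for each edge): `L^c_{n+1}` consists of two relabelled copies
of `L^c_n` joined by the path `(e_1^n)^⌢(0), p_0, …, p_{c(n)}, (e_1^n)^⌢(1)`. -/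
def LEdges (c : ℕ → ℕ) : ℕ → Set (List ℕ × List ℕ)
  | 0 => ∅
  | n + 1 =>
      {e | ∃ u v, (u, v) ∈ LEdges c n ∧ ∃ i ≤ 1, e = (u ++ [i], v ++ [i])} ∪
      {(pathEnd n 1 ++ [0], [0]), ([c n], pathEnd n 1 ++ [1])} ∪
      {e | ∃ j, j < c n ∧ e = ([j], [j + 1])}

/-- The (symmetric) adjacency relation of `L^c_n`. -/
def LAdj (c : ℕ → ℕ) (n : ℕ) (u v : List ℕ) : Prop :=
  (u, v) ∈ LEdges c n ∨ (v, u) ∈ LEdges c n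

section Aux

lemma walk_refl' {α : Type*} (Adj : α → α → Prop) (u : α) : (walkLens Adj u u).Nonempty :=
  ⟨0, fun _ => u, rfl, rfl, fun j hj => absurd hj (Nat.not_lt_zero j)⟩

lemma walk_single' {α : Type*} {Adj : α → α → Prop} {u v : α} (h : Adj u v) :
    (walkLens Adj u v).Nonempty :=
  ⟨1, fun j => if j = 0 then u else v, by simp, by simp, fun j hj => by
    interval_cases j
    simpa using h⟩

lemma walk_trans' {α : Type*} {Adj : α → α → Prop} {u x v : α}
    (h1 : (walkLens Adj u x).Nonempty) (h2 : (walkLens Adj x v).Nonempty) :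
    (walkLens Adj u v).Nonempty := by
  obtain ⟨m1, w1, e10, e1m, hw1⟩ := h1
  obtain ⟨m2, w2, e20, e2m, hw2⟩ := h2
  refine ⟨m1 + m2, fun j => if j < m1 then w1 j else w2 (j - m1), ?_, ?_, ?_⟩
  · rcases Nat.eq_zero_or_pos m1 with h | h
    · subst h
      simpa using e20.trans (e1m.symm.trans e10)
    · simpa [h] using e10
  · have h : ¬ (m1 + m2 < m1) := by omega
    simpa [h] using e2m
  · intro j hj
    rcases lt_trichotomy (j + 1) m1 with h1 | h1 | h1
    · have hj' : j < m1 := by omega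
      simp only [if_pos hj', if_pos h1]
      exact hw1 j hj'
    · have hj' : j < m1 := by omega
      have hn : ¬ (j + 1 < m1) := by omega
      have hval : w2 (j + 1 - m1) = w1 (j + 1) := by
        rw [h1, Nat.sub_self, e20, ← e1m]
      simp only [if_pos hj', if_neg hn]
      rw [hval]
      exact hw1 j hj'
    · have hn1 : ¬ (j < m1) := by omega
      have hn2 : ¬ (j + 1 < m1) := by omega
      have he : j + 1 - m1 = (j - m1) + 1 := by omega
      simp only [if_neg hn1, if_neg hn2, he]
      exact hw2 (j - m1) (by omega)

lemma walk_symm' {α : Type*} {Adj : α → α → Prop} (hsym : ∀ a b, Adj a b → Adj b a)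
    {u v : α} (h : (walkLens Adj u v).Nonempty) : (walkLens Adj v u).Nonempty := by
  obtain ⟨m, w, e0, em, hw⟩ := h
  refine ⟨m, fun j => w (m - j), by simpa using em, by simpa using e0, fun j hj => ?_⟩
  show Adj (w (m - j)) (w (m - (j + 1)))
  have h1 : m - j = (m - (j + 1)) + 1 := by omega
  rw [h1]
  exact hsym _ _ (hw (m - (j + 1)) (by omega))

lemma LAdj_symm' (c : ℕ → ℕ) (n : ℕ) : ∀ a b, LAdj c n a b → LAdj c n b a :=
  fun _ _ h => Or.symm h

lemma pathEnd_ne_nil (n i : ℕ) : pathEnd n i ≠ [] := by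
  cases n <;> simp [pathEnd]

lemma pathEnd_succ' (n i : ℕ) : pathEnd (n + 1) i = pathEnd n 0 ++ [i] := by
  cases n with
  | zero => rfl
  | succ m => simp [pathEnd, List.replicate_succ']

lemma pathEnd_mem' (c : ℕ → ℕ) : ∀ n i, i ≤ 1 → pathEnd n i ∈ LVerts c n := by
  intro n
  induction n with
  | zero => intro i _; simp [pathEnd, LVerts]
  | succ n ih =>
    intro i hi
    rw [pathEnd_succ']
    interval_cases i
    · exact Or.inl (Or.inl ⟨_, ih 0 (by norm_num), rfl⟩)
    · exact Or.inl (Or.inr ⟨_, ih 0 (by norm_num), rfl⟩)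

lemma walk_lift' (c : ℕ → ℕ) (n i : ℕ) (hi : i ≤ 1) {u v : List ℕ}
    (h : (walkLens (LAdj c n) u v).Nonempty) :
    (walkLens (LAdj c (n + 1)) (u ++ [i]) (v ++ [i])).Nonempty := by
  obtain ⟨m, w, e0, em, hw⟩ := h
  refine ⟨m, fun j => w j ++ [i], by simp [e0], by simp [em], fun j hj => ?_⟩
  rcases hw j hj with h | h
  · exact Or.inl (Or.inl (Or.inl ⟨_, _, h, i, hi, rfl⟩))
  · exact Or.inr (Or.inl (Or.inl ⟨_, _, h, i, hi, rfl⟩))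

lemma conn_chain' (c : ℕ → ℕ) (n : ℕ) : ∀ k ≤ c n,
    (walkLens (LAdj c (n + 1)) [0] [k]).Nonempty := by
  intro k hk
  refine ⟨k, fun j => [min j k], by simp, by simp, fun j hj => ?_⟩
  show LAdj c (n + 1) [min j k] [min (j + 1) k]
  have h1 : min j k = j := by omega
  have h2 : min (j + 1) k = j + 1 := by omega
  rw [h1, h2]
  exact Or.inl (Or.inr ⟨j, by omega, rfl⟩)

lemma adj_e1_zero (c : ℕ → ℕ) (n : ℕ) : LAdj c (n + 1) [0] (pathEnd n 1 ++ [0]) :=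
  Or.inr (Or.inl (Or.inr (Set.mem_insert _ _)))

lemma adj_cn_e1 (c : ℕ → ℕ) (n : ℕ) : LAdj c (n + 1) [c n] (pathEnd n 1 ++ [1]) :=
  Or.inl (Or.inl (Or.inr (Set.mem_insert_of_mem _ rfl)))

lemma conn_to_end' (c : ℕ → ℕ) : ∀ n, ∀ v ∈ LVerts c n,
    (walkLens (LAdj c n) v (pathEnd n 0)).Nonempty := by
  intro n
  induction n with
  | zero =>
    intro v hv
    have : v = [0] := hv
    subst this
    exact walk_refl' _ _
  | succ n ih =>
    have e1mem := pathEnd_mem' c n 1 le_rfl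
    -- [0] is connected to the left endpoint of L_{n+1}
    have step0 : (walkLens (LAdj c (n + 1)) [0] (pathEnd (n + 1) 0)).Nonempty := by
      rw [pathEnd_succ']
      exact walk_trans' (walk_single' (adj_e1_zero c n))
        (walk_lift' c n 0 (by norm_num) (ih _ e1mem))
    intro v hv
    rcases hv with (⟨u, hu, rfl⟩ | ⟨u, hu, rfl⟩) | ⟨j, hj, rfl⟩
    · rw [pathEnd_succ']
      exact walk_lift' c n 0 (by norm_num) (ih u hu)
    · -- u ++ [1] → pathEnd n 1 ++ [1] → [c n] → [0] → pathEnd (n+1) 0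
      have w1 : (walkLens (LAdj c n) u (pathEnd n 1)).Nonempty :=
        walk_trans' (ih u hu) (walk_symm' (LAdj_symm' c n) (ih _ e1mem))
      have w2 := walk_lift' c n 1 le_rfl w1
      have w3 : (walkLens (LAdj c (n + 1)) (pathEnd n 1 ++ [1]) [c n]).Nonempty :=
        walk_single' (LAdj_symm' c (n + 1) _ _ (adj_cn_e1 c n))
      have w4 : (walkLens (LAdj c (n + 1)) [c n] [0]).Nonempty :=
        walk_symm' (LAdj_symm' c (n + 1)) (conn_chain' c n (c n) le_rfl)
      exact walk_trans' w2 (walk_trans' w3 (walk_trans' w4 step0))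
    · exact walk_trans' (walk_symm' (LAdj_symm' c (n + 1)) (conn_chain' c n j hj)) step0

/-- Bipartition coloring of `L^c_n`. -/
def chiL (c : ℕ → ℕ) : ℕ → List ℕ → Bool
  | 0, _ => false
  | n + 1, v =>
    if v.length ≤ 1 then xor (!(chiL c n (pathEnd n 1))) (decide (v.headI % 2 = 1))
    else xor (chiL c n v.dropLast) (decide (v.getLast? = some 1))

lemma chiL_concat (c : ℕ → ℕ) (n : ℕ) {u : List ℕ} (hu : u ≠ []) (i : ℕ) :
    chiL c (n + 1) (u ++ [i]) = xor (chiL c n u) (decide (i = 1)) := by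
  have hlen : ¬((u ++ [i]).length ≤ 1) := by
    cases u with
    | nil => exact absurd rfl hu
    | cons a l => simp
  simp only [chiL]
  rw [if_neg hlen, List.dropLast_concat, List.getLast?_concat]
  simp

lemma chiL_single (c : ℕ → ℕ) (n j : ℕ) :
    chiL c (n + 1) [j] = xor (!(chiL c n (pathEnd n 1))) (decide (j % 2 = 1)) := by
  simp [chiL]
  congr

lemma edges_ne_nil (c : ℕ → ℕ) : ∀ n u v, (u, v) ∈ LEdges c n → u ≠ [] ∧ v ≠ [] := by
  intro n
  induction n with
  | zero => intro u v h; exact absurd h (Set.notMem_empty _)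
  | succ n ih =>
    intro u v h
    rcases h with ((⟨a, b, hab, i, hi, heq⟩ | h) | ⟨j, hj, heq⟩)
    · simp only [Prod.mk.injEq] at heq
      obtain ⟨rfl, rfl⟩ := heq
      constructor <;> simp
    · simp only [Set.mem_insert_iff, Set.mem_singleton_iff, Prod.mk.injEq] at h
      rcases h with ⟨rfl, rfl⟩ | ⟨rfl, rfl⟩ <;> constructor <;> simp [pathEnd_ne_nil]
    · simp only [Prod.mk.injEq] at heq
      obtain ⟨rfl, rfl⟩ := heq
      constructor <;> simp

lemma chiL_flip (c : ℕ → ℕ) (hodd : ∀ i, Odd (c i)) :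
    ∀ n u v, (u, v) ∈ LEdges c n → chiL c n u ≠ chiL c n v := by
  intro n
  induction n with
  | zero => intro u v h; exact absurd h (Set.notMem_empty _)
  | succ n ih =>
    intro u v h
    rcases h with ((⟨a, b, hab, i, hi, heq⟩ | h) | ⟨j, hj, heq⟩)
    · simp only [Prod.mk.injEq] at heq
      obtain ⟨rfl, rfl⟩ := heq
      obtain ⟨ha, hb⟩ := edges_ne_nil c n a b hab
      rw [chiL_concat c n ha i, chiL_concat c n hb i]
      have hne := ih a b hab
      revert hne
      cases chiL c n a <;> cases chiL c n b <;> simp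
    · simp only [Set.mem_insert_iff, Set.mem_singleton_iff, Prod.mk.injEq] at h
      rcases h with ⟨rfl, rfl⟩ | ⟨rfl, rfl⟩
      · rw [chiL_concat c n (pathEnd_ne_nil n 1) 0, chiL_single]
        cases chiL c n (pathEnd n 1) <;> simp
      · rw [chiL_concat c n (pathEnd_ne_nil n 1) 1, chiL_single]
        have hcn : c n % 2 = 1 := Nat.odd_iff.mp (hodd n)
        rw [hcn]
        cases chiL c n (pathEnd n 1) <;> simp
    · simp only [Prod.mk.injEq] at heq
      obtain ⟨rfl, rfl⟩ := heq
      rw [chiL_single, chiL_single]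
      rcases Nat.mod_two_eq_zero_or_one j with h | h <;>
        (have h' : (j + 1) % 2 = 1 - j % 2 := by omega) <;>
        rw [h] at h' ⊢ <;> rw [h'] <;>
        cases chiL c n (pathEnd n 1) <;> simp

lemma walk_parity' (c : ℕ → ℕ) (hodd : ∀ i, Odd (c i)) (n : ℕ) :
    ∀ m w, IsWalk (LAdj c n) m w →
      chiL c n (w m) = xor (chiL c n (w 0)) (decide (m % 2 = 1)) := by
  intro m
  induction m with
  | zero => intro w _; simp
  | succ m ih =>
    intro w hw
    have h1 := ih w (fun j hj => hw j (by omega))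
    have h2 : chiL c n (w (m + 1)) = !(chiL c n (w m)) := by
      rcases hw m (by omega) with h | h
      · have := chiL_flip c hodd n _ _ h
        cases hA : chiL c n (w m) <;> cases hB : chiL c n (w (m + 1)) <;> simp_all
      · have := chiL_flip c hodd n _ _ h
        cases hA : chiL c n (w m) <;> cases hB : chiL c n (w (m + 1)) <;> simp_all
    rw [h2, h1]
    rcases Nat.mod_two_eq_zero_or_one m with h | h <;>
      (have h' : (m + 1) % 2 = 1 - m % 2 := by omega) <;>
      rw [h] at h' ⊢ <;> rw [h'] <;>
      cases chiL c n (w 0) <;> simp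

end Aux

/-- If `n > 0`, `c` takes only odd values, and `(p_k)^⌢t^⌢(0)` and
`(p_k)^⌢t^⌢(1)` are vertices of `L^c_n` (with `t` a binary string of length
less than `n`), then these two vertices are an odd distance apart in the
path `L^c_n`. -/
theorem stmt9 (c : ℕ → ℕ) (hodd : ∀ i, Odd (c i)) (n k : ℕ) (hn : 0 < n)
    (t : List ℕ) (htbin : ∀ a ∈ t, a ≤ 1) (htlen : t.length < n)
    (h0 : (k :: (t ++ [0])) ∈ LVerts c n) (h1 : (k :: (t ++ [1])) ∈ LVerts c n) :
    (walkLens (LAdj c n) (k :: (t ++ [0])) (k :: (t ++ [1]))).Nonempty ∧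
    Odd (sInf (walkLens (LAdj c n) (k :: (t ++ [0])) (k :: (t ++ [1])))) := by
  obtain ⟨m, rfl⟩ : ∃ m, n = m + 1 := ⟨n - 1, by omega⟩
  have hne : (walkLens (LAdj c (m + 1)) (k :: (t ++ [0])) (k :: (t ++ [1]))).Nonempty :=
    walk_trans' (conn_to_end' c (m + 1) _ h0)
      (walk_symm' (LAdj_symm' c (m + 1)) (conn_to_end' c (m + 1) _ h1))
  refine ⟨hne, ?_⟩
  obtain ⟨w, e0, em, hw⟩ := Nat.sInf_mem hne
  have hp := walk_parity' c hodd (m + 1) _ w hw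
  have hchi : chiL c (m + 1) (k :: (t ++ [0])) ≠ chiL c (m + 1) (k :: (t ++ [1])) := by
    have h0' : k :: (t ++ [0]) = (k :: t) ++ [0] := rfl
    have h1' : k :: (t ++ [1]) = (k :: t) ++ [1] := rfl
    rw [h0', h1', chiL_concat c m (by simp) 0, chiL_concat c m (by simp) 1]
    cases chiL c m (k :: t) <;> simp
  rw [Nat.odd_iff]
  by_contra hcon
  have hz : sInf (walkLens (LAdj c (m + 1)) (k :: (t ++ [0])) (k :: (t ++ [1]))) % 2 = 0 := by
    omega
  rw [hz, e0, em] at hp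
  simp at hp
  exact hchi (hp ▸ rfl)
end
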